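/- Let z_1 > ... > z_N be the zeros of the Hermite polynomial H_N. Define the N×N symmetric matrix S by S_{ii} = 1 + Σ_{l≠i} (z_i - z_l)^{-2} and S_{ij} = -(z_i - z_j)^{-2} for i ≠ j. Then det S = N!. -/

import Mathlib

open Finset

def IsHermiteZero (N : ℕ) (z : ℝ) : Prop :=
  Polynomial.aeval (Real.sqrt 2 * z) (Polynomial.hermite N) = 0

open Polynomial

lemma derivative_hermite (n : ℕ) :
    derivative (hermite (n + 1)) = C (n + 1 : ℤ) * hermite n := by
  induction n with
  | zero => simp [hermite_one, hermite_zero]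
  | succ n ih =>
    have hd : derivative (hermite n) = X * hermite n - hermite (n+1) := by
      rw [hermite_succ n]; ring
    rw [hermite_succ (n+1), derivative_sub, derivative_mul, derivative_X, one_mul, ih,
      derivative_mul, derivative_C, zero_mul, hd]
    push_cast [C_add, C_1]
    ring

lemma hermite_ode (n : ℕ) :
    derivative (derivative (hermite n)) = X * derivative (hermite n) - C (n : ℤ) * hermite n := by
  have h2 := congrArg derivative (hermite_succ n)
  rw [derivative_hermite n, derivative_sub, derivative_mul, derivative_X, one_mul] at h2
  rw [C_add, C_1] at h2
  linear_combination h2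

noncomputable def QR (N : ℕ) : Polynomial ℝ := (hermite N).map (Int.castRingHom ℝ)

lemma QR_monic (N : ℕ) : (QR N).Monic := (hermite_monic N).map _

lemma QR_natDegree (N : ℕ) : (QR N).natDegree = N := by
  rw [QR, natDegree_map_eq_of_injective (fun a b h => by simpa using h), natDegree_hermite]

lemma QR_eq_prod (N : ℕ) (w : Fin N → ℝ) (hinj : Function.Injective w)
    (h0 : ∀ i, (QR N).eval (w i) = 0) :
    QR N = ∏ l : Fin N, (X - C (w l)) := by
  have hmp : (∏ l : Fin N, (X - C (w l))).Monic :=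
    monic_prod_of_monic _ _ (fun l _ => monic_X_sub_C (w l))
  have hdp : (∏ l : Fin N, (X - C (w l))).natDegree = N := by
    rw [natDegree_prod_of_monic _ _ (fun l _ => monic_X_sub_C (w l))]
    simp
  apply eq_of_degree_sub_lt_of_eval_index_eq (v := w) Finset.univ
    (Set.injOn_of_injective hinj)
  · rcases eq_or_ne (QR N - ∏ l : Fin N, (X - C (w l))) 0 with h | h
    · rw [h, degree_zero]
      exact WithBot.bot_lt_coe _
    · calc (QR N - ∏ l : Fin N, (X - C (w l))).degree
          < (QR N).degree := degree_sub_lt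
            (by rw [degree_eq_natDegree (QR_monic N).ne_zero,
                degree_eq_natDegree hmp.ne_zero, QR_natDegree, hdp])
            (QR_monic N).ne_zero
            (by rw [(QR_monic N).leadingCoeff, hmp.leadingCoeff])
        _ ≤ ((Finset.univ : Finset (Fin N)).card : WithBot ℕ) := by
            rw [degree_eq_natDegree (QR_monic N).ne_zero, QR_natDegree]
            simp
  · intro j _
    rw [h0 j, eval_prod, eq_comm, Finset.prod_eq_zero (Finset.mem_univ j)]
    simp

lemma QR_ode (N : ℕ) :
    derivative (derivative (QR N)) = X * derivative (QR N) - C (N : ℝ) * QR N := by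
  have h := congrArg (Polynomial.map (Int.castRingHom ℝ)) (hermite_ode N)
  simpa [QR, Polynomial.derivative_map, Polynomial.map_mul, Polynomial.map_sub] using h

lemma derivative_finset_prod {ι : Type*} [DecidableEq ι] (s : Finset ι) (f : ι → Polynomial ℝ) :
    derivative (∏ b ∈ s, f b) = ∑ b ∈ s, (∏ a ∈ s.erase b, f a) * derivative (f b) := by
  induction s using Finset.induction_on with
  | empty => simp
  | @insert a s ha ih =>

    rw [Finset.prod_insert ha, derivative_mul, ih, Finset.sum_insert ha,
      Finset.erase_insert ha, Finset.mul_sum]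
    have hcg : ∀ b ∈ s, f a * ((∏ x ∈ s.erase b, f x) * derivative (f b))
        = (∏ x ∈ (insert a s).erase b, f x) * derivative (f b) := by
      intro b hb
      rw [Finset.erase_insert_of_ne (by rintro rfl; exact ha hb),
        Finset.prod_insert (fun h => ha (Finset.mem_of_mem_erase h))]
      ring
    rw [Finset.sum_congr rfl hcg]
    ring

lemma sum_inv_roots (N : ℕ) (w : Fin N → ℝ) (hinj : Function.Injective w)
    (h0 : ∀ i, (QR N).eval (w i) = 0) (i : Fin N) :
    ∑ j ∈ Finset.univ.erase i, (w i - w j)⁻¹ = w i / 2 := by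
  classical
  set R : Polynomial ℝ := ∏ l ∈ Finset.univ.erase i, (X - C (w l)) with hR
  have hfact : QR N = (X - C (w i)) * R := by
    rw [QR_eq_prod N w hinj h0, ← Finset.mul_prod_erase _ _ (Finset.mem_univ i)]
  have hwj : ∀ j ∈ Finset.univ.erase i, w i - w j ≠ 0 := by
    intro j hj
    exact sub_ne_zero.mpr (fun h => (Finset.ne_of_mem_erase hj) (hinj h.symm))
  have hRne : R.eval (w i) ≠ 0 := by
    rw [hR, eval_prod]
    refine Finset.prod_ne_zero_iff.mpr (fun j hj => ?_)
    simpa using hwj j hj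
  -- derivatives
  have hD1 : derivative (QR N) = R + (X - C (w i)) * derivative R := by
    rw [hfact, derivative_mul, derivative_sub, derivative_X, derivative_C]; ring
  have hD2 : derivative (derivative (QR N)) =
      2 * derivative R + (X - C (w i)) * derivative (derivative R) := by
    rw [hD1, derivative_add, derivative_mul, derivative_sub, derivative_X, derivative_C]; ring
  -- evaluate ODE at w i
  have hode := congrArg (Polynomial.eval (w i)) (QR_ode N)
  rw [hD2, hD1] at hode
  simp only [eval_add, eval_mul, eval_sub, eval_X, eval_C, h0 i, sub_self, zero_mul,
    mul_zero, add_zero, eval_ofNat] at hode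
  -- hode : 2 * eval (w i) (derivative R) = w i * eval (w i) R  (roughly)
  have hkey : 2 * (derivative R).eval (w i) = w i * R.eval (w i) := by linarith [hode]
  -- compute derivative of R at w i
  have hDR : (derivative R).eval (w i) =
      (∑ j ∈ Finset.univ.erase i, (w i - w j)⁻¹) * R.eval (w i) := by
    rw [hR, derivative_finset_prod]
    rw [eval_finset_sum]
    rw [Finset.sum_mul]
    refine Finset.sum_congr rfl (fun j hj => ?_)
    rw [derivative_sub, derivative_X, derivative_C, sub_zero, mul_one, eval_prod]
    have hmul : (w i - w j) * ∏ l ∈ (Finset.univ.erase i).erase j, (w i - w l)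
        = R.eval (w i) := by
      rw [hR, eval_prod]
      simp only [eval_sub, eval_X, eval_C]
      exact Finset.mul_prod_erase (Finset.univ.erase i) (fun l => w i - w l) hj
    have hne := hwj j hj
    simp only [eval_sub, eval_X, eval_C]
    field_simp
    rw [hR] at hmul
    linear_combination hmul
  rw [hDR] at hkey
  have h2 : (∑ j ∈ Finset.univ.erase i, (w i - w j)⁻¹) * R.eval (w i)
      = (w i / 2) * R.eval (w i) := by linarith [hkey]
  exact mul_right_cancel₀ hRne h2

lemma aux2 (x y : ℝ) : ∀ m : ℕ, x^(m+2) - y^(m+2) = ((m:ℝ)+2) * x^(m+1) * (x-y)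
    - (∑ e ∈ Finset.range (m+1), ((e:ℝ)+1) * x^e * y^(m-e)) * (x-y)^2
  | 0 => by norm_num; ring
  | (m+1) => by
    have hA : (∑ e ∈ Finset.range (m+2), x^e * y^(m+1-e)) * (x - y)
        = x^(m+2) - y^(m+2) := by
      have := geom_sum₂_mul x y (m+2)
      simpa using this
    have hB : (∑ e ∈ Finset.range (m+2), ((e:ℝ)+1) * x^e * y^(m+1-e))
        = x * (∑ e ∈ Finset.range (m+1), ((e:ℝ)+1) * x^e * y^(m-e))
          + ∑ e ∈ Finset.range (m+2), x^e * y^(m+1-e) := by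
      have hsplit : (∑ e ∈ Finset.range (m+2), ((e:ℝ)+1) * x^e * y^(m+1-e))
          = (∑ e ∈ Finset.range (m+2), (e:ℝ) * x^e * y^(m+1-e))
            + ∑ e ∈ Finset.range (m+2), x^e * y^(m+1-e) := by
        rw [← Finset.sum_add_distrib]
        refine Finset.sum_congr rfl (fun e _ => by ring)
      rw [hsplit]
      congr 1
      rw [Finset.sum_range_succ' (fun e => (e:ℝ) * x^e * y^(m+1-e)) (m+1)]
      simp only [Nat.cast_zero, zero_mul, add_zero, Nat.succ_sub_succ, Nat.cast_add,
        Nat.cast_one]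
      rw [Finset.mul_sum]
      refine Finset.sum_congr rfl (fun e _ => by ring)
    have ih := aux2 x y m
    push_cast at ih ⊢
    linear_combination x * ih + (x-y)^2 * hB + (x - y) * hA

lemma aux3 (x y : ℝ) (k : ℕ) :
    x^k - y^k = (k:ℝ) * x^(k-1) * (x-y)
      - (∑ e ∈ Finset.range (k-1), ((e:ℝ)+1) * x^e * y^(k-2-e)) * (x-y)^2 := by
  match k with
  | 0 => simp
  | 1 => simp
  | (m+2) =>
    have := aux2 x y m
    simpa [Nat.add_sub_cancel] using this

lemma aux4 (x y : ℝ) (hxy : x ≠ y) (k : ℕ) :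
    ((x-y)^2)⁻¹ * (x^k - y^k) = (k:ℝ) * x^(k-1) * (x-y)⁻¹
      - ∑ e ∈ Finset.range (k-1), ((e:ℝ)+1) * x^e * y^(k-2-e) := by
  have hne : x - y ≠ 0 := sub_ne_zero.mpr hxy
  rw [aux3 x y k]
  field_simp

lemma sum_inv_z (N : ℕ) (z : Fin N → ℝ) (hord : StrictAnti z)
    (hzero : ∀ i, IsHermiteZero N (z i)) (i : Fin N) :
    ∑ j ∈ Finset.univ.erase i, (z i - z j)⁻¹ = z i := by
  have hs2 : (0:ℝ) < Real.sqrt 2 := Real.sqrt_pos.mpr (by norm_num)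
  set w : Fin N → ℝ := fun j => Real.sqrt 2 * z j with hw
  have hinj : Function.Injective w := by
    intro a b hab
    exact hord.injective (mul_left_cancel₀ (ne_of_gt hs2) hab)
  have h0 : ∀ j, (QR N).eval (w j) = 0 := by
    intro j
    have := hzero j
    rw [IsHermiteZero] at this
    rw [QR, eval_map, ← algebraMap_int_eq, ← Polynomial.aeval_def]
    exact this
  have key := sum_inv_roots N w hinj h0 i
  have h2 : Real.sqrt 2 * Real.sqrt 2 = 2 := Real.mul_self_sqrt (by norm_num)
  calc ∑ j ∈ Finset.univ.erase i, (z i - z j)⁻¹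
      = ∑ j ∈ Finset.univ.erase i, Real.sqrt 2 * (w i - w j)⁻¹ := by
        refine Finset.sum_congr rfl (fun j hj => ?_)
        show (z i - z j)⁻¹ = Real.sqrt 2 * (Real.sqrt 2 * z i - Real.sqrt 2 * z j)⁻¹
        rw [show Real.sqrt 2 * z i - Real.sqrt 2 * z j = Real.sqrt 2 * (z i - z j) by ring,
          mul_inv, ← mul_assoc, mul_inv_cancel₀ (ne_of_gt hs2), one_mul]
    _ = Real.sqrt 2 * (w i / 2) := by rw [← Finset.mul_sum, key]
    _ = z i := by rw [hw]; field_simp; linear_combination z i * h2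

lemma stmt3_gauss_sum (n : ℕ) : ∑ e ∈ Finset.range n, ((e:ℝ)+1) = n*(n+1)/2 := by
  induction n with
  | zero => simp
  | succ n ih => rw [Finset.sum_range_succ, ih]; push_cast; ring

lemma colid (N : ℕ) (z : Fin N → ℝ) (hinj : Function.Injective z)
    (hz1 : ∀ i, ∑ j ∈ Finset.univ.erase i, (z i - z j)⁻¹ = z i) (i : Fin N) (k : ℕ) :
    z i ^ k + ∑ l ∈ Finset.univ.erase i, ((z i - z l)^2)⁻¹ * (z i ^ k - z l ^ k)
      = ((k:ℝ)+1) * z i ^ k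
        + (if 2 ≤ k then ((k:ℝ)-1)*(k:ℝ)/2 * z i ^ (k-2) else 0)
        - ∑ j ∈ Finset.range (k-1), ((j:ℝ)+1) * (∑ l, z l ^ (k-2-j)) * z i ^ j := by
  have hne : ∀ l ∈ Finset.univ.erase i, z i ≠ z l := by
    intro l hl h
    exact (Finset.ne_of_mem_erase hl) (hinj h.symm)
  -- apply aux4 termwise
  have h1 : ∑ l ∈ Finset.univ.erase i, ((z i - z l)^2)⁻¹ * (z i ^ k - z l ^ k)
      = ∑ l ∈ Finset.univ.erase i, ((k:ℝ) * z i ^ (k-1) * (z i - z l)⁻¹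
          - ∑ e ∈ Finset.range (k-1), ((e:ℝ)+1) * z i ^ e * z l ^ (k-2-e)) :=
    Finset.sum_congr rfl (fun l hl => aux4 (z i) (z l) (hne l hl) k)
  rw [h1, Finset.sum_sub_distrib, ← Finset.mul_sum, hz1 i, Finset.sum_comm]
  -- now : z i^k + (k * z i^(k-1) * z i - ∑_e ∑_l ...) = RHS
  have h2 : (k:ℝ) * z i ^ (k-1) * z i = (k:ℝ) * z i ^ k := by
    cases k with
    | zero => simp
    | succ m => rw [Nat.add_sub_cancel, mul_assoc, ← pow_succ]
  have h3 : ∀ e ∈ Finset.range (k-1),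
      ∑ l ∈ Finset.univ.erase i, ((e:ℝ)+1) * z i ^ e * z l ^ (k-2-e)
      = ((e:ℝ)+1) * (∑ l, z l ^ (k-2-e)) * z i ^ e
        - ((e:ℝ)+1) * z i ^ (k-2) := by
    intro e he
    rw [Finset.mem_range] at he
    rw [← Finset.mul_sum, Finset.sum_erase_eq_sub (Finset.mem_univ i)]
    have hpow : z i ^ e * z i ^ (k-2-e) = z i ^ (k-2) := by
      rw [← pow_add, Nat.add_sub_cancel' (by omega : e ≤ k - 2)]
    linear_combination (-(e:ℝ)-1) * hpow
  rw [Finset.sum_congr rfl h3, Finset.sum_sub_distrib, h2]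
  have h4 : ∑ e ∈ Finset.range (k-1), ((e:ℝ)+1) * z i ^ (k-2)
      = (if 2 ≤ k then ((k:ℝ)-1)*(k:ℝ)/2 * z i ^ (k-2) else 0) := by
    rw [← Finset.sum_mul, stmt3_gauss_sum (k-1)]
    by_cases hk : 2 ≤ k
    · rw [if_pos hk]
      have : ((k-1:ℕ):ℝ) = (k:ℝ) - 1 := by
        rw [Nat.cast_sub (by omega)]; simp
      rw [this]
      have : ((k-1+1:ℕ):ℝ) = (k:ℝ) := by
        rw [Nat.sub_add_cancel (by omega)]
      push_cast
      ring
    · rw [if_neg hk]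
      have : k - 1 = 0 := by omega
      rw [this]
      simp
  rw [h4]
  ring

theorem stmt_3 (N : ℕ) (z : Fin N → ℝ) (hord : StrictAnti z)
    (hzero : ∀ i, IsHermiteZero N (z i))
    (S : Matrix (Fin N) (Fin N) ℝ)
    (hS : ∀ i j, S i j =
      if i = j then 1 + ∑ l ∈ Finset.univ.erase i, ((z i - z l) ^ 2)⁻¹
      else -((z i - z j) ^ 2)⁻¹) :
    S.det = (N.factorial : ℝ) := by
  classical
  have hinj : Function.Injective z := hord.injective
  have hz1 : ∀ i, ∑ j ∈ Finset.univ.erase i, (z i - z j)⁻¹ = z i :=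
    sum_inv_z N z hord hzero
  set t : ℕ → ℕ → ℝ := fun m k =>
    (if m = k then (k:ℝ)+1 else 0)
    + (if (m = k-2 ∧ 2 ≤ k) then ((k:ℝ)-1)*(k:ℝ)/2 else 0)
    - (if m < k-1 then ((m:ℝ)+1) * (∑ l, z l ^ (k-2-m)) else 0)
    with ht
  set T : Matrix (Fin N) (Fin N) ℝ := fun m k => t (m:ℕ) (k:ℕ) with hT
  -- the RHS sum
  have hRHS : ∀ (i k : Fin N), ∑ m : Fin N, z i ^ (m:ℕ) * T m k
      = (((k:ℕ):ℝ)+1) * z i ^ (k:ℕ)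
        + (if 2 ≤ (k:ℕ) then (((k:ℕ):ℝ)-1)*((k:ℕ):ℝ)/2 * z i ^ ((k:ℕ)-2) else 0)
        - ∑ j ∈ Finset.range ((k:ℕ)-1), ((j:ℝ)+1) * (∑ l, z l ^ ((k:ℕ)-2-j)) * z i ^ j := by
    intro i k
    rw [hT]
    rw [Fin.sum_univ_eq_sum_range (fun j => z i ^ j * t j (k:ℕ)) N]
    rw [ht]
    have hsplit : ∀ j ∈ Finset.range N, (z i ^ j *
          ((if j = (k:ℕ) then ((k:ℕ):ℝ)+1 else 0)
          + (if (j = (k:ℕ)-2 ∧ 2 ≤ (k:ℕ)) then (((k:ℕ):ℝ)-1)*((k:ℕ):ℝ)/2 else 0)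
          - (if j < (k:ℕ)-1 then ((j:ℝ)+1) * (∑ l, z l ^ ((k:ℕ)-2-j)) else 0)))
        = (if j = (k:ℕ) then (((k:ℕ):ℝ)+1) * z i ^ j else 0)
          + (if (j = (k:ℕ)-2 ∧ 2 ≤ (k:ℕ)) then (((k:ℕ):ℝ)-1)*((k:ℕ):ℝ)/2 * z i ^ j else 0)
          - (if j < (k:ℕ)-1 then ((j:ℝ)+1) * (∑ l, z l ^ ((k:ℕ)-2-j)) * z i ^ j else 0) := by
      intro j _
      split_ifs <;> ring
    rw [Finset.sum_congr rfl hsplit, Finset.sum_sub_distrib, Finset.sum_add_distrib]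
    congr 1
    · congr 1
      · rw [Finset.sum_ite_eq' (Finset.range N) ((k:ℕ))
          (fun j => (((k:ℕ):ℝ)+1) * z i ^ j), if_pos (Finset.mem_range.mpr k.isLt)]
      · by_cases h2k : 2 ≤ (k:ℕ)
        · simp only [h2k, and_true]
          rw [Finset.sum_ite_eq' (Finset.range N) ((k:ℕ)-2)
            (fun j => (((k:ℕ):ℝ)-1)*((k:ℕ):ℝ)/2 * z i ^ j),
            if_pos (Finset.mem_range.mpr (by omega : (k:ℕ)-2 < N))]
          simp
        · simp [h2k]
    · rw [← Finset.sum_subset (Finset.range_subset_range.mpr (by omega : (k:ℕ)-1 ≤ N))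
        (fun j _ hj => by rw [if_neg (by simpa using hj)])]
      exact Finset.sum_congr rfl (fun j hj => if_pos (Finset.mem_range.mp hj))
  -- the LHS sum
  have hLHS : ∀ (i k : Fin N), ∑ l, S i l * z l ^ (k:ℕ)
      = z i ^ (k:ℕ) + ∑ l ∈ Finset.univ.erase i, ((z i - z l)^2)⁻¹ * (z i ^ (k:ℕ) - z l ^ (k:ℕ)) := by
    intro i k
    rw [← Finset.add_sum_erase _ (fun l => S i l * z l ^ (k:ℕ)) (Finset.mem_univ i)]
    rw [hS i i, if_pos rfl]
    have hrw : ∀ l ∈ Finset.univ.erase i, S i l * z l ^ (k:ℕ)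
        = -(((z i - z l)^2)⁻¹ * z l ^ (k:ℕ)) := by
      intro l hl
      rw [hS i l, if_neg (fun h => (Finset.ne_of_mem_erase hl) h.symm)]
      ring
    rw [Finset.sum_congr rfl hrw,
      Finset.sum_congr rfl (fun l (_ : l ∈ Finset.univ.erase i) =>
        mul_sub (((z i - z l)^2)⁻¹) (z i ^ (k:ℕ)) (z l ^ (k:ℕ))),
      Finset.sum_sub_distrib, add_mul, one_mul, Finset.sum_mul]
    rw [Finset.sum_neg_distrib]
    ring
  -- column identity
  have hcol : ∀ (i k : Fin N), ∑ l, S i l * z l ^ (k:ℕ) = ∑ m : Fin N, z i ^ (m:ℕ) * T m k := by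
    intro i k
    rw [hLHS i k, hRHS i k]
    exact colid N z hinj hz1 i (k:ℕ)
  -- matrix identity
  have hmul : S * Matrix.vandermonde z = Matrix.vandermonde z * T := by
    ext i k
    rw [Matrix.mul_apply, Matrix.mul_apply]
    simpa [Matrix.vandermonde] using hcol i k
  -- T is upper triangular
  have hTtri : T.BlockTriangular id := by
    intro m k hlt
    have hlt' : (k:ℕ) < (m:ℕ) := hlt
    show t (m:ℕ) (k:ℕ) = 0
    simp only [ht]
    rw [if_neg (by omega : ¬ (m:ℕ) = (k:ℕ)),
      if_neg (by omega : ¬ ((m:ℕ) = (k:ℕ)-2 ∧ 2 ≤ (k:ℕ))),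
      if_neg (by omega : ¬ (m:ℕ) < (k:ℕ)-1)]
    ring
  have hdetT : T.det = (N.factorial : ℝ) := by
    rw [Matrix.det_of_upperTriangular hTtri]
    have hdiag : ∀ k : Fin N, T k k = ((k:ℕ):ℝ)+1 := by
      intro k
      show t (k:ℕ) (k:ℕ) = ((k:ℕ):ℝ)+1
      simp only [ht]
      rw [if_pos trivial, if_neg (by omega : ¬ ((k:ℕ) = (k:ℕ)-2 ∧ 2 ≤ (k:ℕ))),
        if_neg (by omega : ¬ (k:ℕ) < (k:ℕ)-1)]
      ring
    rw [Finset.prod_congr rfl (fun k _ => hdiag k)]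
    rw [Fin.prod_univ_eq_prod_range (fun j => ((j:ℝ)+1)) N]
    exact_mod_cast congrArg (Nat.cast : ℕ → ℝ) (Finset.prod_range_add_one_eq_factorial N)
  have hdetV : (Matrix.vandermonde z).det ≠ 0 :=
    Matrix.det_vandermonde_ne_zero_iff.mpr hinj
  have hdd := congrArg Matrix.det hmul
  rw [Matrix.det_mul, Matrix.det_mul] at hdd
  rw [mul_comm ((Matrix.vandermonde z).det) (T.det)] at hdd
  have := mul_right_cancel₀ hdetV hdd
  rw [this, hdetT]
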